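/- Let B be a symmetric bilinear form on a real vector space V and let α, β ∈ V with B(α,α) = B(β,β) = 1 and B(α,β) = -cos(π/m) for an integer m ≥ 2. Then the product of reflections r_α ∘ r_β has order exactly m in GL(V) when restricted to the span of α and β (equivalently, (r_α ∘ r_β)^m = id on span{α,β} and no smaller positive power is the identity there). -/

import Mathlib

theorem product_of_reflections_order_m_on_span
    (V : Type*) [AddCommGroup V] [Module ℝ V]
    (B : V →ₗ[ℝ] V →ₗ[ℝ] ℝ) (hsymm : ∀ x y, B x y = B y x)
    (α β : V) (hα : B α α = 1) (hβ : B β β = 1)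
    (hind : LinearIndependent ℝ ![α, β])
    (m : ℕ) (hm : 2 ≤ m) (hab : B α β = - Real.cos (Real.pi / m))
    (rα rβ : V → V)
    (hrα : ∀ x, rα x = x - (2 * B x α) • α)
    (hrβ : ∀ x, rβ x = x - (2 * B x β) • β) :
    (∀ x ∈ Submodule.span ℝ {α, β}, (rα ∘ rβ)^[m] x = x) ∧
    (∀ k : ℕ, 0 < k → k < m →
      ∃ x ∈ Submodule.span ℝ {α, β}, (rα ∘ rβ)^[k] x ≠ x) := by
  have hm0 : 0 < m := by omega
  have hmR : (0:ℝ) < m := by exact_mod_cast hm0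
  set θ : ℝ := Real.pi / m with hθdef
  set c : ℝ := Real.cos θ with hcdef
  set s : ℝ := Real.sin θ with hsdef
  have hθpos : 0 < θ := div_pos Real.pi_pos hmR
  have hθlt : θ < Real.pi := by
    rw [hθdef, div_lt_iff₀ hmR]
    have h2 : (2:ℝ) ≤ m := by exact_mod_cast hm
    nlinarith [Real.pi_pos]
  have hs : 0 < s := Real.sin_pos_of_pos_of_lt_pi hθpos hθlt
  have hs0 : s ≠ 0 := ne_of_gt hs
  have hpc : s ^ 2 + c ^ 2 = 1 := Real.sin_sq_add_cos_sq θ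
  have hβα : B β α = -c := by rw [hsymm]; exact hab
  -- single step
  have hstep : ∀ a b : ℝ, (rα ∘ rβ) (a • α + b • β) =
      ((4*c^2-1)*a - 2*c*b) • α + (2*c*a - b) • β := by
    intro a b
    have h1 : B (a • α + b • β) β = -c*a + b := by
      simp [map_add, map_smul, hab, hβ]; ring
    have e1 : rβ (a • α + b • β) = a • α + (2*c*a - b) • β := by
      rw [hrβ, h1]; module
    have h2 : B (a • α + (2*c*a - b) • β) α = a - c*(2*c*a - b) := by
      simp [map_add, map_smul, hα, hβα]; ring
    calc (rα ∘ rβ) (a • α + b • β) = rα (a • α + (2*c*a - b) • β) := by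
          simp [Function.comp, e1]
      _ = _ := by rw [hrα, h2]; module
  -- iterate formula
  have hiter : ∀ (k : ℕ) (a b : ℝ), (haux : True) → (rα ∘ rβ)^[k] (a • α + b • β) =
      (((Real.sin (2*k*θ) * c + Real.cos (2*k*θ) * s) * a - Real.sin (2*k*θ) * b) / s) • α +
      ((Real.sin (2*k*θ) * a - (Real.sin (2*k*θ) * c - Real.cos (2*k*θ) * s) * b) / s) • β := by
    intro k
    induction k with
    | zero =>
      intro a b _
      simp only [Nat.cast_zero, Function.iterate_zero, id_eq, mul_zero, zero_mul,
        Real.sin_zero, Real.cos_zero]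
      rw [show ((0 + 1 * s) * a - 0) / s = a by field_simp; ring,
          show (0 - (0 - 1 * s) * b) / s = b by field_simp; ring]
    | succ k ih =>
      intro a b _
      rw [Function.iterate_succ_apply', ih a b trivial, hstep]
      set S := Real.sin (2*k*θ)
      set C := Real.cos (2*k*θ)
      have hSC : S^2 + C^2 = 1 := Real.sin_sq_add_cos_sq _
      have e2 : (2:ℝ)*(k+1)*θ = 2*k*θ + 2*θ := by ring
      have hS' : Real.sin (2*(k+1:ℕ)*θ) = S * (2*c^2-1) + C * (2*s*c) := by
        push_cast
        rw [e2, Real.sin_add, Real.sin_two_mul, Real.cos_two_mul]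
      have hC' : Real.cos (2*(k+1:ℕ)*θ) = C * (2*c^2-1) - S * (2*s*c) := by
        push_cast
        rw [e2, Real.cos_add, Real.sin_two_mul, Real.cos_two_mul]
      rw [hS', hC']
      congr 1
      · congr 1
        linear_combination (2*c*S*a/s) * hpc
      · congr 1
        linear_combination (2*c*S*b/s) * hpc
  constructor
  · intro x hx
    obtain ⟨a, b, rfl⟩ := Submodule.mem_span_pair.mp hx
    rw [hiter m a b trivial]
    have h2m : (2:ℝ)*m*θ = 2*Real.pi := by
      rw [hθdef]; field_simp
    rw [h2m, Real.sin_two_pi, Real.cos_two_pi]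
    rw [show ((0*c + 1*s)*a - 0*b)/s = a by field_simp; ring,
        show (0*a - (0*c - 1*s)*b)/s = b by field_simp; ring]
  · intro k hk hkm
    refine ⟨α, Submodule.subset_span (by simp), ?_⟩
    intro hEq
    have hkR : (0:ℝ) < k := by exact_mod_cast hk
    have hkmR : (k:ℝ) < m := by exact_mod_cast hkm
    have hEq' : (rα ∘ rβ)^[k] ((1:ℝ) • α + (0:ℝ) • β) = (1:ℝ) • α + (0:ℝ) • β := by
      simpa using hEq
    rw [hiter k 1 0 trivial] at hEq'
    set S := Real.sin (2*k*θ) with hSdef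
    set C := Real.cos (2*k*θ) with hCdef
    have key := (LinearIndependent.pair_iff.mp hind)
      (((S*c + C*s)*1 - S*0)/s - 1) ((S*1 - (S*c - C*s)*0)/s - 0)
      (by linear_combination (norm := module) hEq')
    obtain ⟨k1, k2⟩ := key
    have hq : S = 0 := by field_simp at k2; linarith
    have hx1 : 0 < 2*(k:ℝ)*θ := by positivity
    have hx2 : 2*(k:ℝ)*θ < 2*Real.pi := by
      rw [hθdef]
      calc 2*(k:ℝ)*(Real.pi/m) = (2*Real.pi)*((k:ℝ)/m) := by ring
        _ < (2*Real.pi)*1 := by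
            apply mul_lt_mul_of_pos_left _ (by positivity)
            exact (div_lt_one hmR).mpr hkmR
        _ = 2*Real.pi := mul_one _
    obtain ⟨n, hn⟩ := Real.sin_eq_zero_iff.mp hq
    have hn0 : (0:ℝ) < n := by nlinarith [Real.pi_pos]
    have hn2 : (n:ℝ) < 2 := by nlinarith [Real.pi_pos]
    have hn1 : n = 1 := by
      have h1 : 0 < n := by exact_mod_cast hn0
      have h2 : n < 2 := by exact_mod_cast hn2
      omega
    have hC : C = -1 := by
      rw [hCdef, show 2*(k:ℝ)*θ = Real.pi by rw [← hn, hn1]; norm_num]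
      exact Real.cos_pi
    rw [hq, hC] at k1
    field_simp at k1
    nlinarith [hs]
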